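/- (Lemma 1, part (10c)) Let η > 0, let W ∈ ℂ^{N_rf×N_bs}, let V ∈ ℂ^{N_rf×N_rf} be unitary, and let U ∈ ℂ^{N_bs×N_rf} have all columns nonzero. Define the diagonal matrix D̃ ∈ ℝ^{N_rf×N_rf} by (D̃)_{l,l} = max( Re( ((W* V)_{:,l})* (U)_{:,l} ) / ‖(U)_{:,l}‖² , η ) for l = 1,…,N_rf, where (·)_{:,l} denotes the l-th column. Then for every diagonal matrix D with real diagonal entries all ≥ η, ‖W − V D̃ U*‖_F ≤ ‖W − V D U*‖_F; i.e., D̃ minimizes ‖W − V D U*‖_F² over diagonal matrices whose diagonal entries are lower bounded by η. -/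

import Mathlib

open Matrix

/-- The Frobenius norm of a complex matrix. -/
noncomputable def frobNorm {m n : ℕ} (A : Matrix (Fin m) (Fin n) ℂ) : ℝ :=
  Real.sqrt (∑ i, ∑ j, ‖A i j‖ ^ 2)

lemma complex_expand (t : ℝ) (a b : ℂ) :
    ‖a - (t:ℂ) * b‖ ^ 2
      = ‖a‖ ^ 2 - 2 * t * (a * (starRingEnd ℂ) b).re + t ^ 2 * ‖b‖ ^ 2 := by
  rw [Complex.sq_norm, Complex.sq_norm, Complex.sq_norm]
  simp [Complex.normSq_apply, Complex.mul_re, Complex.mul_im, Complex.sub_re, Complex.sub_im]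
  ring

lemma sum_expand {n : ℕ} (t : ℝ) (a b : Fin n → ℂ) :
    ∑ j, ‖a j - (t:ℂ) * b j‖ ^ 2
      = (∑ j, ‖a j‖ ^ 2) - 2 * t * (∑ j, a j * (starRingEnd ℂ) (b j)).re
        + t ^ 2 * ∑ j, ‖b j‖ ^ 2 := by
  simp only [complex_expand, Complex.re_sum, Finset.sum_add_distrib, Finset.sum_sub_distrib,
    Finset.mul_sum]

lemma sum_sq_eq_trace {m n : ℕ} (A : Matrix (Fin m) (Fin n) ℂ) :
    ∑ i, ∑ j, ‖A i j‖ ^ 2 = (Matrix.trace (Aᴴ * A)).re := by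
  simp [Matrix.trace, Matrix.diag, Matrix.mul_apply, Matrix.conjTranspose_apply,
    Complex.sq_norm, Complex.re_sum, ← Complex.normSq_eq_conj_mul_self]
  rw [Finset.sum_comm]

lemma unitary_sum {m n : ℕ} (V : Matrix (Fin m) (Fin m) ℂ) (hV : Vᴴ * V = 1)
    (X : Matrix (Fin m) (Fin n) ℂ) :
    ∑ i, ∑ j, ‖(V * X) i j‖ ^ 2 = ∑ i, ∑ j, ‖X i j‖ ^ 2 := by
  rw [sum_sq_eq_trace, sum_sq_eq_trace, Matrix.conjTranspose_mul, Matrix.mul_assoc,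
    ← Matrix.mul_assoc Vᴴ V X, hV, Matrix.one_mul]

lemma quad_min (η s p t : ℝ) (hs : 0 < s) (hη : 0 < η) (ht : η ≤ t) :
    -2 * max (p / s) η * p + (max (p / s) η) ^ 2 * s ≤ -2 * t * p + t ^ 2 * s := by
  rcases le_total η (p / s) with h | h
  · rw [max_eq_left h]
    have h1 : p / s * s = p := div_mul_cancel₀ p hs.ne'
    nlinarith [sq_nonneg (t - p / s), mul_pos hs hs]
  · rw [max_eq_right h]
    have h1 : p ≤ η * s := by
      rw [div_le_iff₀ hs] at h; linarith
    nlinarith [mul_nonneg (sub_nonneg.mpr ht) (sub_nonneg.mpr h1),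
      mul_nonneg (sub_nonneg.mpr ht) hs.le]

/-- Lemma 1, part (10c): the diagonal matrix `D̃` with
`(D̃)_{l,l} = max( Re( ((W*V)_{:,l})* (U)_{:,l} ) / ‖(U)_{:,l}‖², η )`
minimizes `‖W − V D U*‖_F` over real diagonal matrices whose diagonal
entries are all at least `η`. -/
theorem diagonal_update_optimal
    (Nbs Nrf : ℕ) (η : ℝ) (hη : 0 < η)
    (W : Matrix (Fin Nrf) (Fin Nbs) ℂ)
    (V : Matrix (Fin Nrf) (Fin Nrf) ℂ) (hV : V ∈ Matrix.unitaryGroup (Fin Nrf) ℂ)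
    (U : Matrix (Fin Nbs) (Fin Nrf) ℂ) (hU : ∀ l, (fun i => U i l) ≠ 0)
    (dtilde : Fin Nrf → ℝ)
    (hdtilde : ∀ l, dtilde l =
      max ((∑ i, (starRingEnd ℂ) ((Wᴴ * V) i l) * U i l).re /
            (∑ i, ‖U i l‖ ^ 2)) η) :
    ∀ d : Fin Nrf → ℝ, (∀ l, η ≤ d l) →
      frobNorm (W - V * Matrix.diagonal (fun l => (dtilde l : ℂ)) * Uᴴ) ≤
        frobNorm (W - V * Matrix.diagonal (fun l => (d l : ℂ)) * Uᴴ) := by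
  intro d hd
  have hVV : V * Vᴴ = 1 := by
    have := (Matrix.mem_unitaryGroup_iff).mp hV
    simpa [Matrix.star_eq_conjTranspose] using this
  have hVV' : Vᴴ * V = 1 := by
    have := (Matrix.mem_unitaryGroup_iff').mp hV
    simpa [Matrix.star_eq_conjTranspose] using this
  set p : Fin Nrf → ℝ := fun l => (∑ j, (Vᴴ * W) l j * U j l).re with hp
  set s : Fin Nrf → ℝ := fun l => ∑ j, ‖U j l‖ ^ 2 with hs
  have key : ∀ e : Fin Nrf → ℝ,
      ∑ i, ∑ j, ‖(W - V * Matrix.diagonal (fun l => (e l : ℂ)) * Uᴴ) i j‖ ^ 2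
        = ∑ l, ((∑ j, ‖(Vᴴ * W) l j‖ ^ 2) - 2 * e l * p l + (e l) ^ 2 * s l) := by
    intro e
    have hre : W - V * Matrix.diagonal (fun l => (e l : ℂ)) * Uᴴ
        = V * (Vᴴ * W - Matrix.diagonal (fun l => (e l : ℂ)) * Uᴴ) := by
      rw [Matrix.mul_sub, ← Matrix.mul_assoc, hVV, Matrix.one_mul, Matrix.mul_assoc]
    rw [hre, unitary_sum V hVV']
    refine Finset.sum_congr rfl (fun l _ => ?_)
    have hentry : ∀ j, (Vᴴ * W - Matrix.diagonal (fun l => (e l : ℂ)) * Uᴴ) l j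
        = (Vᴴ * W) l j - (e l : ℂ) * (starRingEnd ℂ) (U j l) := by
      intro j
      simp [Matrix.sub_apply, Matrix.diagonal_mul, Matrix.conjTranspose_apply]
    calc ∑ j, ‖(Vᴴ * W - Matrix.diagonal (fun l => (e l : ℂ)) * Uᴴ) l j‖ ^ 2
        = ∑ j, ‖(Vᴴ * W) l j - (e l : ℂ) * (starRingEnd ℂ) (U j l)‖ ^ 2 := by
          simp only [hentry]
      _ = (∑ j, ‖(Vᴴ * W) l j‖ ^ 2) - 2 * e l * p l + (e l) ^ 2 * s l := by
          rw [sum_expand (e l) (fun j => (Vᴴ * W) l j) (fun j => (starRingEnd ℂ) (U j l))]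
          simp [hp, hs]
  have hspos : ∀ l, 0 < s l := by
    intro l
    have h0 : ∃ i, U i l ≠ 0 := Function.ne_iff.mp (hU l)
    obtain ⟨i, hi⟩ := h0
    refine Finset.sum_pos' (fun j _ => by positivity) ⟨i, Finset.mem_univ i, ?_⟩
    have : ‖U i l‖ ≠ 0 := by simpa using hi
    positivity
  have hdt : ∀ l, dtilde l = max (p l / s l) η := by
    intro l
    have hnum : (∑ i, (starRingEnd ℂ) ((Wᴴ * V) i l) * U i l)
        = ∑ j, (Vᴴ * W) l j * U j l := by
      refine Finset.sum_congr rfl fun i _ => ?_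
      congr 1
      rw [Matrix.mul_apply, Matrix.mul_apply, map_sum]
      refine Finset.sum_congr rfl fun k _ => ?_
      simp [Matrix.conjTranspose_apply, _root_.map_mul, mul_comm]
    rw [hdtilde l, hnum]
  unfold frobNorm
  apply Real.sqrt_le_sqrt
  rw [key dtilde, key d]
  refine Finset.sum_le_sum (fun l _ => ?_)
  have := quad_min η (s l) (p l) (d l) (hspos l) hη (hd l)
  rw [hdt l]
  linarith
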